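/- Let n be a natural number, G = (Fin n → ZMod 2), R = AddMonoidAlgebra (ZMod 2) G, and I ⊆ R the augmentation ideal. The map G → I/I² sending g ∈ G to the class of 1 + [g] modulo I² is bijective; hence it is an isomorphism of (ZMod 2)-vector spaces between G and I/I², and in particular dim_{ZMod 2}(I/I²) = n. -/

import Mathlib

open AddMonoidAlgebra

/-- The augmentation homomorphism of the group algebra of `(ZMod 2)^n` over `ZMod 2`:
the algebra homomorphism sending each basis element `[g]` to `1`. -/
noncomputable def aug (n : ℕ) :
    AddMonoidAlgebra (ZMod 2) (Fin n → ZMod 2) →ₐ[ZMod 2] ZMod 2 :=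
  AddMonoidAlgebra.lift (ZMod 2) (ZMod 2) (Fin n → ZMod 2) 1

/-- The augmentation ideal, i.e. the kernel of the augmentation homomorphism. -/
noncomputable def augIdeal (n : ℕ) : Ideal (AddMonoidAlgebra (ZMod 2) (Fin n → ZMod 2)) :=
  RingHom.ker (aug n)

/-- The augmentation ideal `I`, viewed as a `ZMod 2`-submodule of the group algebra. -/
noncomputable def ISub (n : ℕ) :
    Submodule (ZMod 2) (AddMonoidAlgebra (ZMod 2) (Fin n → ZMod 2)) :=
  Submodule.restrictScalars (ZMod 2) (augIdeal n)

/-- `I²`, viewed as a `ZMod 2`-submodule of `I`. -/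
noncomputable def I2Sub (n : ℕ) : Submodule (ZMod 2) (ISub n) :=
  Submodule.comap (ISub n).subtype
    (Submodule.restrictScalars (ZMod 2) ((augIdeal n) ^ 2))

/-- The quotient `ZMod 2`-module `I / I²`. -/
noncomputable abbrev IModISq (n : ℕ) := ISub n ⧸ I2Sub n

theorem one_add_single_mem_augIdeal (n : ℕ) (g : Fin n → ZMod 2) :
    (1 : AddMonoidAlgebra (ZMod 2) (Fin n → ZMod 2)) + AddMonoidAlgebra.single g 1 ∈
      augIdeal n := by
  rw [augIdeal, RingHom.mem_ker, map_add, map_one]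
  simp [aug]
  decide

/-- The map `G → I/I²` sending `g` to the class of `1 + [g]` modulo `I²`. -/
noncomputable def classOf (n : ℕ) (g : Fin n → ZMod 2) : IModISq n :=
  Submodule.Quotient.mk
    (⟨1 + AddMonoidAlgebra.single g 1, one_add_single_mem_augIdeal n g⟩ : ISub n)

/-! ### Auxiliary lemmas -/

lemma aug_single (n : ℕ) (g : Fin n → ZMod 2) (c : ZMod 2) :
    aug n (AddMonoidAlgebra.single g c) = c := by
  simp [aug]

/-- The "derivation" `Σ c_g [g] ↦ Σ c_g g`. -/
noncomputable def dmap (n : ℕ) :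
    AddMonoidAlgebra (ZMod 2) (Fin n → ZMod 2) →ₗ[ZMod 2] (Fin n → ZMod 2) :=
  Finsupp.linearCombination (ZMod 2) id ∘ₗ (AddMonoidAlgebra.coeffLinearEquiv (ZMod 2)).toLinearMap

lemma dmap_single (n : ℕ) (g : Fin n → ZMod 2) (c : ZMod 2) :
    dmap n (AddMonoidAlgebra.single g c) = c • g :=
  Finsupp.linearCombination_single (ZMod 2) (v := id) c g

lemma dmap_mul (n : ℕ) (x y : AddMonoidAlgebra (ZMod 2) (Fin n → ZMod 2)) :
    dmap n (x * y) = aug n x • dmap n y + aug n y • dmap n x := by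
  induction x using AddMonoidAlgebra.induction_linear with
  | zero => simp
  | add a b ha hb =>
      rw [add_mul, map_add, ha, hb, map_add (aug n), map_add (dmap n)]
      module
  | single g a =>
      induction y using AddMonoidAlgebra.induction_linear with
      | zero => simp
      | add c d hc hd =>
          rw [mul_add, map_add, hc, hd, map_add (aug n), map_add (dmap n)]
          module
      | single h b =>
          rw [AddMonoidAlgebra.single_mul_single, dmap_single, dmap_single, dmap_single,
            aug_single, aug_single]
          rw [smul_smul, smul_smul, smul_add, mul_comm b a]
          abel

lemma dmap_eq_zero_of_mem_sq (n : ℕ) {x : AddMonoidAlgebra (ZMod 2) (Fin n → ZMod 2)}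
    (hx : x ∈ augIdeal n ^ 2) : dmap n x = 0 := by
  rw [pow_two] at hx
  refine Submodule.mul_induction_on hx ?_ ?_
  · intro a ha b hb
    rw [augIdeal, RingHom.mem_ker] at ha hb
    rw [dmap_mul, ha, hb]
    simp
  · intro a b ha hb
    rw [map_add, ha, hb, add_zero]

/-- The induced map `I/I² → G`. -/
noncomputable def psi (n : ℕ) : IModISq n →ₗ[ZMod 2] (Fin n → ZMod 2) :=
  Submodule.liftQ (I2Sub n) ((dmap n) ∘ₗ (ISub n).subtype) (by
    intro x hx
    simp only [LinearMap.mem_ker, LinearMap.comp_apply, Submodule.subtype_apply]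
    exact dmap_eq_zero_of_mem_sq n hx)

lemma dmap_one (n : ℕ) : dmap n (1 : AddMonoidAlgebra (ZMod 2) (Fin n → ZMod 2)) = 0 := by
  rw [AddMonoidAlgebra.one_def, dmap_single, smul_zero]

lemma psi_classOf (n : ℕ) (g : Fin n → ZMod 2) : psi n (classOf n g) = g := by
  rw [classOf, psi, Submodule.liftQ_apply]
  simp only [LinearMap.comp_apply, Submodule.subtype_apply]
  rw [map_add (dmap n), dmap_one, dmap_single, zero_add, one_smul]

lemma one_add_one_eq_zero (n : ℕ) :
    (1 : AddMonoidAlgebra (ZMod 2) (Fin n → ZMod 2)) + 1 = 0 := by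
  rw [AddMonoidAlgebra.one_def, ← AddMonoidAlgebra.single_add]
  norm_num
  rfl

lemma classOf_zero (n : ℕ) : classOf n 0 = 0 := by
  rw [classOf]
  have h : (⟨1 + AddMonoidAlgebra.single 0 1, one_add_single_mem_augIdeal n 0⟩ : ISub n) = 0 := by
    apply Subtype.ext
    show (1 : AddMonoidAlgebra (ZMod 2) (Fin n → ZMod 2)) + AddMonoidAlgebra.single 0 1 = 0
    rw [← AddMonoidAlgebra.one_def, one_add_one_eq_zero]
  rw [h, Submodule.Quotient.mk_zero]

lemma classOf_add (n : ℕ) (g h : Fin n → ZMod 2) :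
    classOf n (g + h) = classOf n g + classOf n h := by
  rw [classOf, classOf, classOf, ← Submodule.Quotient.mk_add, Submodule.Quotient.eq]
  show _ ∈ Submodule.comap _ _
  rw [Submodule.mem_comap]
  have hval : (((⟨1 + AddMonoidAlgebra.single (g + h) 1, one_add_single_mem_augIdeal n (g + h)⟩ : ISub n)
      - (⟨1 + AddMonoidAlgebra.single g 1, one_add_single_mem_augIdeal n g⟩
        + ⟨1 + AddMonoidAlgebra.single h 1, one_add_single_mem_augIdeal n h⟩)) : ISub n).1
      = (1 + AddMonoidAlgebra.single g 1) * (1 + AddMonoidAlgebra.single h 1) := by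
    show (1 + AddMonoidAlgebra.single (g + h) 1)
        - ((1 + AddMonoidAlgebra.single g 1) + (1 + AddMonoidAlgebra.single h 1)) = _
    have h2 := one_add_one_eq_zero n
    have hs : AddMonoidAlgebra.single g 1 * AddMonoidAlgebra.single h 1
        = AddMonoidAlgebra.single (g + h) (1 : ZMod 2) := by
      rw [AddMonoidAlgebra.single_mul_single, one_mul]
    linear_combination -hs + (-(1 : AddMonoidAlgebra (ZMod 2) (Fin n → ZMod 2))
      - AddMonoidAlgebra.single g 1 - AddMonoidAlgebra.single h 1) * h2
  show _ ∈ Submodule.restrictScalars _ _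
  rw [Submodule.restrictScalars_mem]
  rw [Submodule.subtype_apply, hval, pow_two]
  exact Ideal.mul_mem_mul (one_add_single_mem_augIdeal n g) (one_add_single_mem_augIdeal n h)

/-- `classOf` bundled as a linear map. -/
noncomputable def phi (n : ℕ) : (Fin n → ZMod 2) →ₗ[ZMod 2] IModISq n where
  toFun := classOf n
  map_add' := classOf_add n
  map_smul' := by
    intro c g
    rcases (by decide : ∀ c : ZMod 2, c = 0 ∨ c = 1) c with rfl | rfl
    · simp [classOf_zero]
    · simp

lemma aug_apply (n : ℕ) (x : AddMonoidAlgebra (ZMod 2) (Fin n → ZMod 2)) :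
    aug n x = ∑ g ∈ x.coeff.support, x.coeff g := by
  conv_lhs => rw [← AddMonoidAlgebra.sum_coeff_single x]
  rw [Finsupp.sum, map_sum]
  exact Finset.sum_congr rfl fun g _ => aug_single n g (x.coeff g)

lemma key (n : ℕ) (x : AddMonoidAlgebra (ZMod 2) (Fin n → ZMod 2))
    (hx : aug n x = 0) :
    ∑ g ∈ x.coeff.support, x.coeff g • ((1 : AddMonoidAlgebra (ZMod 2) (Fin n → ZMod 2))
      + AddMonoidAlgebra.single g 1) = x := by
  have h1 : ∀ g : Fin n → ZMod 2, x.coeff g • ((1 : AddMonoidAlgebra (ZMod 2) (Fin n → ZMod 2))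
      + AddMonoidAlgebra.single g 1) = x.coeff g • (1 : AddMonoidAlgebra (ZMod 2) (Fin n → ZMod 2))
      + AddMonoidAlgebra.single g (x.coeff g) := by
    intro g
    rw [smul_add]
    congr 1
    rw [AddMonoidAlgebra.smul_single, smul_eq_mul, mul_one]
  calc ∑ g ∈ x.coeff.support, x.coeff g • ((1 : AddMonoidAlgebra (ZMod 2) (Fin n → ZMod 2))
        + AddMonoidAlgebra.single g 1)
      = (∑ g ∈ x.coeff.support, x.coeff g • (1 : AddMonoidAlgebra (ZMod 2) (Fin n → ZMod 2)))
        + ∑ g ∈ x.coeff.support, AddMonoidAlgebra.single g (x.coeff g) := by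
        rw [← Finset.sum_add_distrib]
        exact Finset.sum_congr rfl fun g _ => h1 g
    _ = (aug n x) • (1 : AddMonoidAlgebra (ZMod 2) (Fin n → ZMod 2)) + x := by
        rw [← Finset.sum_smul, ← aug_apply]
        congr 1
        exact AddMonoidAlgebra.sum_coeff_single x
    _ = x := by rw [hx, zero_smul, zero_add]

lemma classOf_surjective (n : ℕ) : Function.Surjective (classOf n) := by
  intro z
  obtain ⟨x, rfl⟩ := Submodule.Quotient.mk_surjective (I2Sub n) z
  refine ⟨∑ g ∈ (x : AddMonoidAlgebra (ZMod 2) (Fin n → ZMod 2)).coeff.support,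
    (x : AddMonoidAlgebra (ZMod 2) (Fin n → ZMod 2)).coeff g • g, ?_⟩
  have hx0 : aug n (x : AddMonoidAlgebra (ZMod 2) (Fin n → ZMod 2)) = 0 := by
    have h := x.2
    have h' : (x : AddMonoidAlgebra (ZMod 2) (Fin n → ZMod 2)) ∈ augIdeal n := h
    rwa [augIdeal, RingHom.mem_ker] at h'
  have hsum : x = ∑ g ∈ (x : AddMonoidAlgebra (ZMod 2) (Fin n → ZMod 2)).coeff.support,
      (x : AddMonoidAlgebra (ZMod 2) (Fin n → ZMod 2)).coeff g •
        (⟨1 + AddMonoidAlgebra.single g 1, one_add_single_mem_augIdeal n g⟩ : ISub n) := by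
    apply Subtype.ext
    rw [Submodule.coe_sum]
    simp only [SetLike.val_smul]
    exact (key n _ hx0).symm
  show phi n _ = _
  rw [map_sum]
  conv_rhs => rw [hsum, ← Submodule.mkQ_apply, map_sum]
  refine Finset.sum_congr rfl fun g _ => ?_
  rw [map_smul, map_smul]
  rfl

/-- The map `G → I/I²`, `g ↦ (1 + [g]) mod I²`, is bijective; in particular the
`ZMod 2`-dimension of `I/I²` equals `n`. -/
theorem classOf_bijective_and_finrank (n : ℕ) :
    Function.Bijective (classOf n) ∧ Module.finrank (ZMod 2) (IModISq n) = n := by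
  have hinj : Function.Injective (classOf n) :=
    Function.LeftInverse.injective (g := psi n) (psi_classOf n)
  have hb : Function.Bijective (classOf n) := ⟨hinj, classOf_surjective n⟩
  refine ⟨hb, ?_⟩
  have e : (Fin n → ZMod 2) ≃ₗ[ZMod 2] IModISq n := LinearEquiv.ofBijective (phi n) hb
  rw [← LinearEquiv.finrank_eq e, Module.finrank_pi, Fintype.card_fin]
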